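/- Let Ĥ = Â_K be a square matrix, Δ_K ≥ 0 and Δ_S ≥ 0 nonnegative matrices with Δ_K = Δ_S |M_K| for some matrix M_K. Let I_Δ be the symmetric interval matrix [−Δ_S, Δ_S] viewed as a matrix zonotope with generators given by the entrywise decomposition of Δ_S, and let I_{A_K} = Ĥ ⊕ [−Δ_K, Δ_K]. Then the j-fold application of T_{I_{A_K}} to I_Δ equals the matrix zonotope ⟨0; Ĥ^j E(F₀), Ĥ^{j−1} E(F₁), …, E(F_j)⟩, where F₀ = Δ_S, F_{j+1} = Δ_K Σ_{i=0}^{j} |Ĥ^{j−i}| Fᵢ, and E(·) denotes entrywise decomposition. Consequently, the tightest interval containing T^j_{I_{A_K}}(I_Δ) is [−Σ_{i=0}^{j} |Ĥ^{j−i}| Fᵢ, Σ_{i=0}^{j} |Ĥ^{j−i}| Fᵢ]. -/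

import Mathlib

/-- Interval matrix C ⊕ [−Δ, Δ]. -/
def intv {p q : ℕ} (C Δ : Matrix (Fin p) (Fin q) ℝ) : Set (Matrix (Fin p) (Fin q) ℝ) :=
  {M | ∀ i j, |M i j - C i j| ≤ Δ i j}

/-- Interval matrix {M | L ≤ M ≤ U}. -/
def box {p q : ℕ} (L U : Matrix (Fin p) (Fin q) ℝ) : Set (Matrix (Fin p) (Fin q) ℝ) :=
  {M | ∀ i j, L i j ≤ M i j ∧ M i j ≤ U i j}

/-- Entrywise absolute value of a matrix. -/
def aent {p q : ℕ} (M : Matrix (Fin p) (Fin q) ℝ) : Matrix (Fin p) (Fin q) ℝ :=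
  Matrix.of fun i j => |M i j|

/-- Matrix zonotope with a list of generators. -/
def zonoL {p q : ℕ} (C : Matrix (Fin p) (Fin q) ℝ)
    (G : List (Matrix (Fin p) (Fin q) ℝ)) : Set (Matrix (Fin p) (Fin q) ℝ) :=
  {M | ∃ β : Fin G.length → ℝ, (∀ i, |β i| ≤ 1) ∧ M = C + ∑ i, β i • G.get i}

/-- `edec M k` keeps the entry of `M` at position `k` and is zero elsewhere. -/
def edec {l q : ℕ} (M : Matrix (Fin l) (Fin q) ℝ) (k : Fin l × Fin q) :
    Matrix (Fin l) (Fin q) ℝ :=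
  Matrix.of fun i j => if (i, j) = k then M i j else 0

/-- The entrywise decomposition E(M), as a list of matrices. -/
noncomputable def edecL {l q : ℕ} (M : Matrix (Fin l) (Fin q) ℝ) :
    List (Matrix (Fin l) (Fin q) ℝ) :=
  (Finset.univ : Finset (Fin l × Fin q)).toList.map (edec M)

/-- The operator T_I on (center, generator-list) representations of matrix zonotopes,
for the interval matrix I = C ⊕ [−Δ, Δ]. -/
noncomputable def Tmap {n q : ℕ} (C Δ : Matrix (Fin n) (Fin n) ℝ)
    (Z : Matrix (Fin n) (Fin q) ℝ × List (Matrix (Fin n) (Fin q) ℝ)) :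
    Matrix (Fin n) (Fin q) ℝ × List (Matrix (Fin n) (Fin q) ℝ) :=
  (C * Z.1, Z.2.map (fun X => C * X) ++ edecL (Δ * (aent Z.1 + (Z.2.map aent).sum)))

/-- T^j_{I_{A_K}}(I_Δ) = ⟨0; Ĥ^j E(F₀), Ĥ^{j−1} E(F₁), …, E(F_j)⟩, and its tightest
containing interval matrix is [−Σ_{i=0}^{j}|Ĥ^{j−i}|Fᵢ, Σ_{i=0}^{j}|Ĥ^{j−i}|Fᵢ]. -/

private lemma listSum_apply {p q : ℕ} (l : List (Matrix (Fin p) (Fin q) ℝ)) (i : Fin p)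
    (j : Fin q) : l.sum i j = (l.map fun X => X i j).sum := by
  induction l with
  | nil => simp
  | cons a t ih => simp [Matrix.add_apply, ih]

private lemma toList_map_sum {α : Type*} {M : Type*} [AddCommMonoid M] (s : Finset α)
    (f : α → M) : (s.toList.map f).sum = ∑ x ∈ s, f x := by
  rw [← Multiset.sum_coe, ← Multiset.map_coe, Finset.coe_toList]
  rfl

private lemma aent_mul_edec_sum {p m r : ℕ} (A : Matrix (Fin p) (Fin m) ℝ)
    (M : Matrix (Fin m) (Fin r) ℝ) (hM : ∀ i j, 0 ≤ M i j) :
    ∑ k : Fin m × Fin r, aent (A * edec M k) = aent A * M := by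
  ext i j
  rw [Matrix.sum_apply]
  have h1 : ∀ k : Fin m × Fin r, aent (A * edec M k) i j
      = if j = k.2 then |A i k.1| * M k.1 k.2 else 0 := by
    rintro ⟨k1, k2⟩
    have h2 : (A * edec M (k1, k2)) i j = if j = k2 then A i k1 * M k1 k2 else 0 := by
      simp only [Matrix.mul_apply, edec, Matrix.of_apply, Prod.mk.injEq, mul_ite, mul_zero]
      by_cases hj : j = k2
      · subst hj
        simp
      · simp [hj]
    simp only [aent, Matrix.of_apply, h2]
    by_cases hj : j = k2
    · simp [hj, abs_mul, abs_of_nonneg (hM k1 k2)]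
    · simp [hj]
  simp only [h1]
  rw [Fintype.sum_prod_type]
  simp only [Finset.sum_ite_eq, Finset.mem_univ, if_true]
  simp [Matrix.mul_apply, aent]

private lemma edecL_aent_sum {p m r : ℕ} (A : Matrix (Fin p) (Fin m) ℝ)
    (M : Matrix (Fin m) (Fin r) ℝ) (hM : ∀ i j, 0 ≤ M i j) :
    (((edecL M).map fun X => aent (A * X)).sum) = aent A * M := by
  rw [edecL, List.map_map, toList_map_sum]
  exact aent_mul_edec_sum A M hM

private lemma range_map_sum {M : Type*} [AddCommMonoid M] (n : ℕ) (f : ℕ → M) :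
    ((List.range n).map f).sum = ∑ i ∈ Finset.range n, f i := by
  induction n with
  | zero => simp
  | succ k ih => rw [List.range_succ]; simp [ih, Finset.sum_range_succ]

private lemma flatMap_sum {α : Type*} {M : Type*} [AddCommMonoid M] (l : List α)
    (f : α → List M) : (l.flatMap f).sum = (l.map fun a => (f a).sum).sum := by
  induction l with
  | nil => simp
  | cons a t ih => simp [ih]

private lemma aent_sum_target {n q : ℕ} (A : ℕ → Matrix (Fin n) (Fin n) ℝ)
    (F : ℕ → Matrix (Fin n) (Fin q) ℝ) (hFpos : ∀ i a b, 0 ≤ F i a b) (m : ℕ) :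
    ((((List.range m).flatMap fun i => (edecL (F i)).map fun X => A i * X).map aent).sum)
      = ∑ i ∈ Finset.range m, aent (A i) * F i := by
  rw [List.map_flatMap, flatMap_sum, range_map_sum]
  refine Finset.sum_congr rfl fun i _ => ?_
  rw [List.map_map]
  rw [show (aent ∘ fun X : Matrix (Fin n) (Fin q) ℝ => A i * X)
      = fun X => aent (A i * X) from rfl]
  exact edecL_aent_sum (A i) (F i) (hFpos i)

private lemma map_one_mul {p q : ℕ} (l : List (Matrix (Fin p) (Fin q) ℝ)) :
    (l.map fun X => (1 : Matrix (Fin p) (Fin p) ℝ) * X) = l := by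
  rw [show (fun X : Matrix (Fin p) (Fin q) ℝ => (1 : Matrix (Fin p) (Fin p) ℝ) * X) = id by
    funext X; simp, List.map_id]

private lemma aent_zero {p q : ℕ} : aent (0 : Matrix (Fin p) (Fin q) ℝ) = 0 := by
  ext i j; simp [aent]

private lemma iter_formula {n q : ℕ} (Hhat ΔK : Matrix (Fin n) (Fin n) ℝ)
    (ΔS : Matrix (Fin n) (Fin q) ℝ)
    (F : ℕ → Matrix (Fin n) (Fin q) ℝ)
    (hF0 : F 0 = ΔS)
    (hF : ∀ j, F (j + 1) = ΔK * ∑ i ∈ Finset.range (j + 1), aent (Hhat ^ (j - i)) * F i)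
    (hFpos : ∀ i a b, 0 ≤ F i a b) (j : ℕ) :
    (Tmap Hhat ΔK)^[j] (0, edecL ΔS) =
      (0, (List.range (j + 1)).flatMap fun i =>
        (edecL (F i)).map fun X => Hhat ^ (j - i) * X) := by
  induction j with
  | zero =>
    simp only [Function.iterate_zero, id_eq]
    rw [show List.range 1 = [0] by rfl, List.flatMap_singleton, Nat.zero_sub, pow_zero,
      map_one_mul, hF0]
  | succ k ih =>
    rw [Function.iterate_succ_apply', ih, Tmap]
    have hmap : ((List.range (k + 1)).flatMap fun i =>
          (edecL (F i)).map fun X => Hhat ^ (k - i) * X).map (fun X => Hhat * X)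
        = (List.range (k + 1)).flatMap fun i =>
          (edecL (F i)).map fun X => Hhat ^ (k + 1 - i) * X := by
      rw [List.map_flatMap]
      refine List.flatMap_congr fun i hi => ?_
      have hik : i ≤ k := Nat.lt_succ_iff.mp (List.mem_range.mp hi)
      rw [List.map_map]
      refine List.map_congr_left fun X _ => ?_
      simp only [Function.comp_apply]
      rw [← Matrix.mul_assoc, ← pow_succ', Nat.succ_sub hik]
    dsimp only
    rw [Matrix.mul_zero, aent_zero, zero_add,
      aent_sum_target (fun i => Hhat ^ (k - i)) F hFpos (k + 1), ← hF k, hmap]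
    conv_rhs => rw [List.range_succ, List.flatMap_append, List.flatMap_singleton, Nat.sub_self,
      pow_zero, map_one_mul]

private lemma sum_aent_apply {p q : ℕ} (G : List (Matrix (Fin p) (Fin q) ℝ)) (i : Fin p)
    (j : Fin q) : ((G.map aent).sum) i j = ∑ k : Fin G.length, |G.get k i j| := by
  rw [listSum_apply, List.map_map]
  rw [show ((fun X : Matrix (Fin p) (Fin q) ℝ => X i j) ∘ aent)
      = fun X : Matrix (Fin p) (Fin q) ℝ => |X i j| from rfl]
  rw [← Fin.sum_univ_fun_getElem]
  simp [List.get_eq_getElem]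

private lemma zono_subset {p q : ℕ} (G : List (Matrix (Fin p) (Fin q) ℝ)) :
    zonoL 0 G ⊆ intv 0 ((G.map aent).sum) := by
  rintro M ⟨β, hβ, rfl⟩ i j
  simp only [Matrix.zero_apply, sub_zero, Matrix.add_apply, zero_add]
  rw [Matrix.sum_apply, sum_aent_apply]
  refine (Finset.abs_sum_le_sum_abs _ _).trans (Finset.sum_le_sum fun k _ => ?_)
  rw [Matrix.smul_apply, smul_eq_mul, abs_mul]
  calc |β k| * |G.get k i j| ≤ 1 * |G.get k i j| :=
        mul_le_mul_of_nonneg_right (hβ k) (abs_nonneg _)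
    _ = |G.get k i j| := one_mul _

private lemma zono_tight {p q : ℕ} (G : List (Matrix (Fin p) (Fin q) ℝ))
    (L U : Matrix (Fin p) (Fin q) ℝ) (h : zonoL 0 G ⊆ box L U) :
    intv 0 ((G.map aent).sum) ⊆ box L U := by
  intro M hM i j
  have hterm : ∀ x : ℝ, (if 0 ≤ x then (1 : ℝ) else -1) * x = |x| := by
    intro x
    split
    · rw [one_mul, abs_of_nonneg ‹_›]
    · rw [abs_of_neg (lt_of_not_ge ‹_›)]; ring
  have hU : ((G.map aent).sum) i j ≤ U i j := by
    have hmem : (0 + ∑ k : Fin G.length,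
        (if 0 ≤ G.get k i j then (1 : ℝ) else -1) • G.get k) ∈ zonoL 0 G := by
      refine ⟨_, fun k => ?_, rfl⟩
      split <;> simp
    have h2 := (h hmem i j).2
    rw [Matrix.add_apply, Matrix.zero_apply, zero_add, Matrix.sum_apply] at h2
    simp only [Matrix.smul_apply, smul_eq_mul, hterm] at h2
    rwa [sum_aent_apply]
  have hL : L i j ≤ -(((G.map aent).sum) i j) := by
    have hmem : (0 + ∑ k : Fin G.length,
        (-(if 0 ≤ G.get k i j then (1 : ℝ) else -1)) • G.get k) ∈ zonoL 0 G := by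
      refine ⟨_, fun k => ?_, rfl⟩
      split <;> simp
    have h2 := (h hmem i j).1
    rw [Matrix.add_apply, Matrix.zero_apply, zero_add, Matrix.sum_apply] at h2
    simp only [Matrix.smul_apply, smul_eq_mul, neg_mul, hterm] at h2
    rw [Finset.sum_neg_distrib] at h2
    rwa [sum_aent_apply]
  have h3 := hM i j
  rw [Matrix.zero_apply, sub_zero, abs_le] at h3
  exact ⟨le_trans hL (by linarith [h3.1]), le_trans h3.2 hU⟩

theorem stmt14 {n q : ℕ} (Hhat ΔK : Matrix (Fin n) (Fin n) ℝ)
    (ΔS : Matrix (Fin n) (Fin q) ℝ) (MK : Matrix (Fin q) (Fin n) ℝ)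
    (hΔK : ∀ i j, 0 ≤ ΔK i j) (hΔS : ∀ i j, 0 ≤ ΔS i j)
    (hMK : ΔK = ΔS * aent MK)
    (F : ℕ → Matrix (Fin n) (Fin q) ℝ)
    (hF0 : F 0 = ΔS)
    (hF : ∀ j, F (j + 1) = ΔK * ∑ i ∈ Finset.range (j + 1), aent (Hhat ^ (j - i)) * F i)
    (j : ℕ) :
    (zonoL ((Tmap Hhat ΔK)^[j] (0, edecL ΔS)).1 ((Tmap Hhat ΔK)^[j] (0, edecL ΔS)).2 =
      zonoL 0 ((List.range (j + 1)).flatMap fun i =>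
        (edecL (F i)).map fun X => Hhat ^ (j - i) * X)) ∧
    (zonoL ((Tmap Hhat ΔK)^[j] (0, edecL ΔS)).1 ((Tmap Hhat ΔK)^[j] (0, edecL ΔS)).2 ⊆
      intv 0 (∑ i ∈ Finset.range (j + 1), aent (Hhat ^ (j - i)) * F i)) ∧
    ∀ L U : Matrix (Fin n) (Fin q) ℝ,
      zonoL ((Tmap Hhat ΔK)^[j] (0, edecL ΔS)).1 ((Tmap Hhat ΔK)^[j] (0, edecL ΔS)).2 ⊆
        box L U →
      intv 0 (∑ i ∈ Finset.range (j + 1), aent (Hhat ^ (j - i)) * F i) ⊆ box L U := by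
  have hFpos : ∀ i a b, 0 ≤ F i a b := by
    intro i
    induction i using Nat.strong_induction_on with
    | _ i ih =>
      match i with
      | 0 =>
        intro a b; rw [hF0]; exact hΔS a b
      | (k + 1) =>
        intro a b
        rw [hF k, Matrix.mul_apply]
        refine Finset.sum_nonneg fun t _ => mul_nonneg (hΔK a t) ?_
        rw [Matrix.sum_apply]
        refine Finset.sum_nonneg fun m hm => ?_
        rw [Matrix.mul_apply]
        refine Finset.sum_nonneg fun s _ => mul_nonneg ?_ ?_
        · simp [aent]
        · exact ih m (Finset.mem_range.mp hm) s b
  have hiter := iter_formula Hhat ΔK ΔS F hF0 hF hFpos j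
  have hsum := aent_sum_target (fun i => Hhat ^ (j - i)) F hFpos (j + 1)
  refine ⟨by rw [hiter], ?_, ?_⟩
  · rw [hiter, ← hsum]
    exact zono_subset _
  · intro L U hLU
    rw [hiter] at hLU
    rw [← hsum]
    exact zono_tight _ L U hLU
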